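/- The norm N on ℝ³ defined by N(a₁, a₂, a₃) = max{|a₁| + |a₃|/2, |a₂| + |a₃|} has the positive Daugavet property: for every nonzero v ∈ ℝ³ with v ≥ 0 coordinatewise and every nonzero linear functional f on ℝ³ with nonnegative coefficients, the rank-one operator T a = f(a) · v satisfies ‖Id + T‖ = 1 + ‖T‖, where the operator norm is the one induced by N. -/

import Mathlib

/-- The norm `N (a₁, a₂, a₃) = max {|a₁| + |a₃|/2, |a₂| + |a₃|}` on `ℝ³`. -/
noncomputable def hipRoofNorm (a : Fin 3 → ℝ) : ℝ := max (|a 0| + |a 2| / 2) (|a 1| + |a 2|)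

/-- The operator norm on maps `ℝ³ → ℝ³` induced by the norm `hipRoofNorm`. -/
noncomputable def hipRoofOpNorm (S : (Fin 3 → ℝ) → (Fin 3 → ℝ)) : ℝ :=
  sSup {r : ℝ | ∃ a : Fin 3 → ℝ, hipRoofNorm a ≤ 1 ∧ r = hipRoofNorm (S a)}

lemma hipRoofNorm_nonneg (a : Fin 3 → ℝ) : 0 ≤ hipRoofNorm a :=
  le_trans (by positivity) (le_max_right _ _)

lemma hipRoofNorm_add_le (x y : Fin 3 → ℝ) :
    hipRoofNorm (x + y) ≤ hipRoofNorm x + hipRoofNorm y := by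
  unfold hipRoofNorm
  simp only [Pi.add_apply]
  have h0 := abs_add_le (x 0) (y 0)
  have h1 := abs_add_le (x 1) (y 1)
  have h2 := abs_add_le (x 2) (y 2)
  have l1 := le_max_left (|x 0| + |x 2| / 2) (|x 1| + |x 2|)
  have r1 := le_max_right (|x 0| + |x 2| / 2) (|x 1| + |x 2|)
  have l2 := le_max_left (|y 0| + |y 2| / 2) (|y 1| + |y 2|)
  have r2 := le_max_right (|y 0| + |y 2| / 2) (|y 1| + |y 2|)
  exact max_le (by linarith) (by linarith)

lemma hipRoofNorm_smul (s : ℝ) (w : Fin 3 → ℝ) :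
    hipRoofNorm (s • w) = |s| * hipRoofNorm w := by
  unfold hipRoofNorm
  simp only [Pi.smul_apply, smul_eq_mul, abs_mul]
  rw [mul_max_of_nonneg _ _ (abs_nonneg s)]
  congr 1 <;> ring

lemma real_sSup_eq {s : Set ℝ} {M : ℝ} (hM : M ∈ s) (hub : ∀ r ∈ s, r ≤ M) :
    sSup s = M :=
  le_antisymm (csSup_le ⟨M, hM⟩ hub) (le_csSup ⟨M, hub⟩ hM)

/-- The norm `N (a₁, a₂, a₃) = max {|a₁| + |a₃|/2, |a₂| + |a₃|}` on `ℝ³` has the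
positive Daugavet property: for every nonzero coordinatewise-nonnegative `v ∈ ℝ³` and
every nonzero linear functional with nonnegative coefficients `c`, the rank-one
operator `T a = (∑ i, c i * a i) • v` satisfies `‖Id + T‖ = 1 + ‖T‖` in the operator
norm induced by `N`. -/
theorem hipRoofNorm_positiveDaugavet
    (v c : Fin 3 → ℝ) (hv : ∀ i, 0 ≤ v i) (hv0 : v ≠ 0)
    (hc : ∀ i, 0 ≤ c i) (hc0 : c ≠ 0) :
    hipRoofOpNorm (fun a => a + (∑ i, c i * a i) • v) =
      1 + hipRoofOpNorm (fun a => (∑ i, c i * a i) • v) := by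
  classical
  have hc0' := hc 0
  have hc1' := hc 1
  have hc2' := hc 2
  have hsum : 0 < c 0 + c 1 + c 2 := by
    by_contra hcon
    push_neg at hcon
    have e0 : c 0 = 0 := le_antisymm (by linarith) hc0'
    have e1 : c 1 = 0 := le_antisymm (by linarith) hc1'
    have e2 : c 2 = 0 := le_antisymm (by linarith) hc2'
    apply hc0
    funext i
    fin_cases i
    · exact e0
    · exact e1
    · exact e2
  set Nv := hipRoofNorm v with hNv
  have hNv0 : 0 ≤ Nv := hipRoofNorm_nonneg v
  set F : ℝ := if c 2 ≤ c 0 / 2 + c 1 then c 0 + c 1 else c 0 / 2 + c 2 with hF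
  have hFpos : 0 < F := by
    rw [hF]
    split_ifs with h
    · linarith
    · push_neg at h; linarith
  have key : ∀ a : Fin 3 → ℝ, hipRoofNorm a ≤ 1 → |∑ i, c i * a i| ≤ F := by
    intro a ha
    have h1 : |a 0| + |a 2| / 2 ≤ 1 := le_trans (le_max_left _ _) ha
    have h2 : |a 1| + |a 2| ≤ 1 := le_trans (le_max_right _ _) ha
    have habs : |c 0 * a 0 + c 1 * a 1 + c 2 * a 2|
        ≤ c 0 * |a 0| + c 1 * |a 1| + c 2 * |a 2| := by
      calc |c 0 * a 0 + c 1 * a 1 + c 2 * a 2|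
          ≤ |c 0 * a 0 + c 1 * a 1| + |c 2 * a 2| := abs_add_le _ _
        _ ≤ |c 0 * a 0| + |c 1 * a 1| + |c 2 * a 2| := by
            linarith [abs_add_le (c 0 * a 0) (c 1 * a 1)]
        _ = c 0 * |a 0| + c 1 * |a 1| + c 2 * |a 2| := by
            rw [abs_mul, abs_mul, abs_mul, abs_of_nonneg hc0', abs_of_nonneg hc1',
              abs_of_nonneg hc2']
    rw [Fin.sum_univ_three, hF]
    split_ifs with h
    · have hA0 : 0 ≤ c 0 * (1 - |a 0| - |a 2| / 2) := mul_nonneg hc0' (by linarith)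
      have hA1 : 0 ≤ c 1 * (1 - |a 1| - |a 2|) := mul_nonneg hc1' (by linarith)
      have hA2 : 0 ≤ (c 0 / 2 + c 1 - c 2) * |a 2| := mul_nonneg (by linarith) (abs_nonneg _)
      nlinarith
    · push_neg at h
      have hB0 : 0 ≤ c 0 * (1 - |a 0| - |a 2| / 2) := mul_nonneg hc0' (by linarith)
      have hB1 : 0 ≤ c 1 * (1 - |a 1| - |a 2|) := mul_nonneg hc1' (by linarith)
      have hB2 : 0 ≤ (c 2 - c 0 / 2 - c 1) * (1 - |a 2|) :=
        mul_nonneg (by linarith) (by linarith [abs_nonneg (a 1)])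
      nlinarith
  -- a maximizer of the functional on the unit ball, lying on both faces of the ball
  obtain ⟨w, hw0, hw1, hw2, hwf⟩ :
      ∃ w : Fin 3 → ℝ, (∀ i, 0 ≤ w i) ∧ w 0 + w 2 / 2 = 1 ∧ w 1 + w 2 = 1 ∧
        (∑ i, c i * w i) = F := by
    rw [hF]
    split_ifs with h
    · refine ⟨![1, 1, 0], ?_, by norm_num [Matrix.cons_val_two, Matrix.vecHead, Matrix.vecTail], by norm_num [Matrix.cons_val_two, Matrix.vecHead, Matrix.vecTail], ?_⟩
      · intro i; fin_cases i <;> norm_num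
      · rw [Fin.sum_univ_three]; norm_num [Matrix.cons_val_two, Matrix.vecHead, Matrix.vecTail]
    · refine ⟨![1 / 2, 0, 1], ?_, by norm_num [Matrix.cons_val_two, Matrix.vecHead, Matrix.vecTail], by norm_num [Matrix.cons_val_two, Matrix.vecHead, Matrix.vecTail], ?_⟩
      · intro i; fin_cases i <;> norm_num
      · rw [Fin.sum_univ_three]; norm_num [Matrix.cons_val_two, Matrix.vecHead, Matrix.vecTail]; ring
  have hwabs : ∀ i, |w i| = w i := fun i => abs_of_nonneg (hw0 i)
  have hNw : hipRoofNorm w = 1 := by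
    unfold hipRoofNorm
    rw [hwabs 0, hwabs 1, hwabs 2, hw1, hw2, max_self]
  have hkey2 : hipRoofNorm (w + F • v) = 1 + F * Nv := by
    have e : ∀ i, |w i + F * v i| = w i + F * v i := fun i =>
      abs_of_nonneg (add_nonneg (hw0 i) (mul_nonneg hFpos.le (hv i)))
    have hNv' : Nv = max (v 0 + v 2 / 2) (v 1 + v 2) := by
      rw [hNv]
      unfold hipRoofNorm
      rw [abs_of_nonneg (hv 0), abs_of_nonneg (hv 1), abs_of_nonneg (hv 2)]
    unfold hipRoofNorm
    simp only [Pi.add_apply, Pi.smul_apply, smul_eq_mul]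
    rw [e 0, e 1, e 2, hNv']
    rcases le_total (v 0 + v 2 / 2) (v 1 + v 2) with hvv | hvv
    · rw [max_eq_right hvv, max_eq_right (by nlinarith [mul_le_mul_of_nonneg_left hvv hFpos.le])]
      nlinarith
    · rw [max_eq_left hvv, max_eq_left (by nlinarith [mul_le_mul_of_nonneg_left hvv hFpos.le])]
      nlinarith
  have hT : hipRoofOpNorm (fun a => (∑ i, c i * a i) • v) = F * Nv := by
    apply real_sSup_eq
    · refine ⟨w, le_of_eq hNw, ?_⟩
      show F * Nv = hipRoofNorm ((∑ i, c i * w i) • v)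
      rw [hwf, hipRoofNorm_smul, abs_of_nonneg hFpos.le, ← hNv]
    · rintro r ⟨a, ha, rfl⟩
      show hipRoofNorm ((∑ i, c i * a i) • v) ≤ F * Nv
      rw [hipRoofNorm_smul, ← hNv]
      exact mul_le_mul_of_nonneg_right (key a ha) hNv0
  have hIT : hipRoofOpNorm (fun a => a + (∑ i, c i * a i) • v) = 1 + F * Nv := by
    apply real_sSup_eq
    · refine ⟨w, le_of_eq hNw, ?_⟩
      show 1 + F * Nv = hipRoofNorm (w + (∑ i, c i * w i) • v)
      rw [hwf, hkey2]
    · rintro r ⟨a, ha, rfl⟩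
      show hipRoofNorm (a + (∑ i, c i * a i) • v) ≤ 1 + F * Nv
      calc hipRoofNorm (a + (∑ i, c i * a i) • v)
          ≤ hipRoofNorm a + hipRoofNorm ((∑ i, c i * a i) • v) := hipRoofNorm_add_le _ _
        _ ≤ 1 + F * Nv := by
            rw [hipRoofNorm_smul, ← hNv]
            exact add_le_add ha (mul_le_mul_of_nonneg_right (key a ha) hNv0)
  rw [hIT, hT]
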